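/- Let N(L) := Nat.card {(a,b) : ℤ × ℤ | (|a| : ℝ) ≤ L^3 ∧ (|b| : ℝ) ≤ L^4 ∧ ((a^2 * |b| : ℤ) : ℝ) ≤ L^9}. Then the function L ↦ Real.log (N(L)) / Real.log L tends to 13/2 as L → ∞ (Filter.Tendsto along Filter.atTop to the neighborhood filter of 13/2). -/

import Mathlib

open Finset Filter Real

lemma sum_inv_Icc_le (A : ℤ) (hA : 1 ≤ A) :
    ∑ a ∈ Finset.Icc (1:ℤ) A, ((a:ℝ))⁻¹ ≤ 1 + Real.log A := by
  refine Int.le_induction (motive := fun A _ => ∑ a ∈ Finset.Icc (1:ℤ) A, ((a:ℝ))⁻¹ ≤ 1 + Real.log A) ?_ ?_ A hA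
  · norm_num
  · intro n hn ih
    have h0 : (0:ℝ) < (n:ℝ) := by exact_mod_cast hn
    have h1 : (0:ℝ) < (n:ℝ) + 1 := by linarith
    have hins : Finset.Icc (1:ℤ) (n+1) = insert (n+1) (Finset.Icc 1 n) := by
      ext x; simp [Finset.mem_Icc]; omega
    rw [hins, Finset.sum_insert (by simp)]
    have hlog : Real.log ((n:ℝ) / ((n:ℝ)+1)) ≤ (n:ℝ)/((n:ℝ)+1) - 1 :=
      Real.log_le_sub_one_of_pos (by positivity)
    have hlogd : Real.log ((n:ℝ) / ((n:ℝ)+1)) = Real.log n - Real.log ((n:ℝ)+1) :=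
      Real.log_div (ne_of_gt h0) (ne_of_gt h1)
    have heq : (n:ℝ)/((n:ℝ)+1) - 1 = -((n:ℝ)+1)⁻¹ := by field_simp; ring
    have hkey : (((n:ℝ))+1)⁻¹ ≤ Real.log ((n:ℝ)+1) - Real.log n := by
      rw [heq, hlogd] at hlog; linarith
    push_cast
    linarith [ih]

def SetL (L : ℝ) : Set (ℤ × ℤ) :=
  {ab : ℤ × ℤ | (|ab.1| : ℝ) ≤ L ^ 3 ∧ (|ab.2| : ℝ) ≤ L ^ 4 ∧
          ((ab.1 ^ 2 * |ab.2| : ℤ) : ℝ) ≤ L ^ 9}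

lemma SetL_sub (L : ℝ) : SetL L ⊆
    ↑(Finset.Icc (-⌊L^3⌋) ⌊L^3⌋ ×ˢ Finset.Icc (-⌊L^4⌋) ⌊L^4⌋) := by
  rintro ⟨a, b⟩ ⟨h1, h2, _⟩
  have ha : |a| ≤ ⌊L^3⌋ := Int.le_floor.2 (by exact_mod_cast h1)
  have hb : |b| ≤ ⌊L^4⌋ := Int.le_floor.2 (by exact_mod_cast h2)
  simp only [Finset.coe_product, Set.mem_prod, Finset.mem_coe, Finset.mem_Icc]
  constructor <;> [exact abs_le.1 ha; exact abs_le.1 hb]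

lemma SetL_finite (L : ℝ) : (SetL L).Finite :=
  Set.Finite.subset (Finset.finite_toSet _) (SetL_sub L)

lemma lower (L : ℝ) (hL : 2 ≤ L) :
    Real.sqrt (L ^ 13) ≤ (Nat.card (SetL L) : ℝ) := by
  have hL1 : (1:ℝ) ≤ L := by linarith
  have hL0 : (0:ℝ) < L := by linarith
  set a0 : ℤ := ⌊Real.sqrt (L^5)⌋ with ha0def
  set b0 : ℤ := ⌊L^4⌋ with hb0def
  have hs0 : (0:ℝ) ≤ Real.sqrt (L^5) := Real.sqrt_nonneg _
  have hs1 : (1:ℝ) ≤ Real.sqrt (L^5) := by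
    rw [show (1:ℝ) = Real.sqrt 1 by simp]
    exact Real.sqrt_le_sqrt (one_le_pow₀ hL1)
  have ha0 : 1 ≤ a0 := Int.le_floor.2 (by exact_mod_cast hs1)
  have hb4 : (1:ℝ) ≤ L^4 := one_le_pow₀ hL1
  have hb0 : 1 ≤ b0 := Int.le_floor.2 (by exact_mod_cast hb4)
  set G : Finset (ℤ × ℤ) := Finset.Icc (-a0) a0 ×ˢ Finset.Icc (-b0) b0 with hGdef
  have hsq : Real.sqrt (L^5) ^ 2 = L ^ 5 := Real.sq_sqrt (by positivity)
  have hGsub : ↑G ⊆ SetL L := by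
    rintro ⟨a, b⟩ hab
    simp only [hGdef, Finset.coe_product, Set.mem_prod, Finset.mem_coe,
      Finset.mem_Icc] at hab
    obtain ⟨⟨ha1, ha2⟩, hb1, hb2⟩ := hab
    have haab : |(a:ℝ)| ≤ Real.sqrt (L^5) := by
      have h : |a| ≤ a0 := abs_le.2 ⟨ha1, ha2⟩
      calc |(a:ℝ)| = ((|a|:ℤ):ℝ) := by push_cast; ring
        _ ≤ (a0 : ℝ) := by exact_mod_cast h
        _ ≤ _ := Int.floor_le _
    have hbab : |(b:ℝ)| ≤ L^4 := by
      have h : |b| ≤ b0 := abs_le.2 ⟨hb1, hb2⟩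
      calc |(b:ℝ)| = ((|b|:ℤ):ℝ) := by push_cast; ring
        _ ≤ (b0 : ℝ) := by exact_mod_cast h
        _ ≤ _ := Int.floor_le _
    have hasq : ((a:ℝ))^2 ≤ L^5 := by
      rw [← sq_abs, ← hsq]
      exact pow_le_pow_left₀ (by positivity) haab 2
    refine ⟨?_, ?_, ?_⟩
    · push_cast
      calc |(a:ℝ)| ≤ Real.sqrt (L^5) := haab
        _ ≤ Real.sqrt ((L^3)^2) := Real.sqrt_le_sqrt (by nlinarith [one_le_pow₀ hL1 (n := 6)])
        _ = L^3 := Real.sqrt_sq (by positivity)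
    · push_cast; exact hbab
    · push_cast
      calc ((a:ℝ))^2 * |(b:ℝ)| ≤ L^5 * L^4 := by
            apply mul_le_mul hasq hbab (abs_nonneg _) (by positivity)
        _ = L^9 := by ring
  have hcard : G.card ≤ Nat.card (SetL L) := by
    rw [Nat.card_coe_set_eq, ← Set.ncard_coe_finset G]
    exact Set.ncard_le_ncard hGsub (SetL_finite L)
  have hGcard : (G.card : ℝ) = ((2*a0+1 : ℤ) : ℝ) * ((2*b0+1 : ℤ) : ℝ) := by
    rw [hGdef, Finset.card_product, Int.card_Icc, Int.card_Icc]
    have h1 : (a0 + 1 - -a0) = 2*a0+1 := by ring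
    have h2 : (b0 + 1 - -b0) = 2*b0+1 := by ring
    rw [h1, h2, Nat.cast_mul,
      show (((2*a0+1).toNat : ℕ) : ℝ) = ((2*a0+1 : ℤ) : ℝ) by
        exact_mod_cast congrArg (fun z : ℤ => (z : ℝ)) (Int.toNat_of_nonneg (by omega : (0:ℤ) ≤ 2*a0+1)),
      show (((2*b0+1).toNat : ℕ) : ℝ) = ((2*b0+1 : ℤ) : ℝ) by
        exact_mod_cast congrArg (fun z : ℤ => (z : ℝ)) (Int.toNat_of_nonneg (by omega : (0:ℤ) ≤ 2*b0+1))]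
  have key : Real.sqrt (L^13) ≤ (G.card : ℝ) := by
    rw [hGcard]
    have hXeq : Real.sqrt (L^13) = Real.sqrt (L^5) * L^4 := by
      rw [show L^13 = L^5 * (L^4)^2 by ring, Real.sqrt_mul (by positivity),
        Real.sqrt_sq (by positivity)]
    rw [hXeq]
    have ha0f : Real.sqrt (L^5) - 1 < (a0:ℝ) := Int.sub_one_lt_floor _
    have hb0f : L^4 - 1 < (b0:ℝ) := Int.sub_one_lt_floor _
    have h1 : Real.sqrt (L^5) ≤ ((2*a0+1 : ℤ):ℝ) := by push_cast; nlinarith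
    have h2 : L^4 ≤ ((2*b0+1 : ℤ):ℝ) := by push_cast; nlinarith
    exact mul_le_mul h1 h2 (by positivity) (by positivity)
  calc Real.sqrt (L^13) ≤ (G.card : ℝ) := key
    _ ≤ _ := by exact_mod_cast hcard

lemma upper (L : ℝ) (hL : 2 ≤ L) :
    (Nat.card (SetL L) : ℝ) ≤ 12 * Real.sqrt (L ^ 13) * (1 + Real.log L) := by
  have hL1 : (1:ℝ) ≤ L := by linarith
  have hL0 : (0:ℝ) < L := by linarith
  set X := Real.sqrt (L^13) with hXdef
  have hX0 : (0:ℝ) ≤ X := Real.sqrt_nonneg _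
  have hX4 : L^4 ≤ X := by
    have h := Real.sqrt_le_sqrt (pow_le_pow_right₀ hL1 (by norm_num : 8 ≤ 13))
    rwa [show L^8 = (L^4)^2 by ring, Real.sqrt_sq (by positivity)] at h
  have hX3 : L^3 ≤ X := by
    have h := Real.sqrt_le_sqrt (pow_le_pow_right₀ hL1 (by norm_num : 6 ≤ 13))
    rwa [show L^6 = (L^3)^2 by ring, Real.sqrt_sq (by positivity)] at h
  have hX1 : (1:ℝ) ≤ X := le_trans (one_le_pow₀ hL1) hX4
  set A : ℤ := ⌊L^3⌋ with hAdef
  set B : ℤ := ⌊L^4⌋ with hBdef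
  set K : ℤ := ⌊L^13⌋ with hKdef
  have hA1 : 1 ≤ A := Int.le_floor.2 (by exact_mod_cast one_le_pow₀ hL1)
  have hB1 : 1 ≤ B := Int.le_floor.2 (by exact_mod_cast one_le_pow₀ hL1)
  have hAle : (A:ℝ) ≤ L^3 := Int.floor_le _
  have hBle : (B:ℝ) ≤ L^4 := Int.floor_le _
  have hKle : (K:ℝ) ≤ L^13 := Int.floor_le _
  set F : Finset (ℤ × ℤ) :=
    (Finset.Icc (-A) A ×ˢ Finset.Icc (-B) B).filter (fun p => (p.1*p.2)^2 ≤ K) with hFdef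
  -- Step 1 : card S ≤ card F
  have hSsub : SetL L ⊆ ↑F := by
    rintro ⟨a, b⟩ ⟨h1, h2, h3⟩
    have ha : |a| ≤ A := Int.le_floor.2 (by exact_mod_cast h1)
    have hb : |b| ≤ B := Int.le_floor.2 (by exact_mod_cast h2)
    have habs : (|b| : ℝ) ≤ L^4 := by exact_mod_cast h2
    have hbn : (0:ℝ) ≤ ((|b| : ℤ) : ℝ) := by positivity
    have hsq : (((a*b)^2 : ℤ) : ℝ) ≤ L^13 := by
      have heq : ((a*b)^2 : ℤ) = (a^2 * |b|) * |b| := by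
        rw [mul_pow, ← sq_abs b]; ring
      rw [heq]
      push_cast
      calc ((a:ℝ)^2 * |(b:ℝ)|) * |(b:ℝ)| ≤ L^9 * L^4 := by
            apply mul_le_mul (by push_cast at h3 ⊢; exact h3)
              (by push_cast at h2 ⊢; exact h2) (abs_nonneg _) (by positivity)
        _ = L^13 := by ring
    have hK : ((a*b)^2 : ℤ) ≤ K := Int.le_floor.2 hsq
    simp only [hFdef, Finset.coe_filter, Set.mem_setOf_eq, Finset.mem_product,
      Finset.mem_Icc]
    exact ⟨⟨abs_le.1 ha, abs_le.1 hb⟩, hK⟩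
  have hcard1 : (Nat.card (SetL L) : ℝ) ≤ (F.card : ℝ) := by
    have : Nat.card (SetL L) ≤ F.card := by
      rw [Nat.card_coe_set_eq, ← Set.ncard_coe_finset F]
      exact Set.ncard_le_ncard hSsub (Finset.finite_toSet F)
    exact_mod_cast this
  -- Step 2 : fiberwise
  set bset : ℤ → Finset ℤ :=
    fun a => (Finset.Icc (-B) B).filter (fun b => (a*b)^2 ≤ K) with hbsetdef
  have hfib : F.card = ∑ a ∈ Finset.Icc (-A) A, (F.filter (fun p => p.1 = a)).card := by
    apply Finset.card_eq_sum_card_fiberwise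
    intro p hp
    simp only [Finset.mem_coe, hFdef, Finset.mem_filter, Finset.mem_product] at hp
    exact hp.1.1
  have hfib_le : ∀ a : ℤ, (F.filter (fun p => p.1 = a)).card ≤ (bset a).card := by
    intro a
    apply Finset.card_le_card_of_injOn Prod.snd
    · intro p hp
      simp only [Finset.mem_coe, hFdef, Finset.mem_filter, Finset.mem_product] at hp
      simp only [Finset.mem_coe, hbsetdef, Finset.mem_filter]
      obtain ⟨⟨⟨_, hpb⟩, hpk⟩, hpa⟩ := hp
      exact ⟨hpb, by rw [← hpa]; exact hpk⟩
    · intro p hp q hq hpq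
      simp only [Finset.coe_filter, Set.mem_setOf_eq] at hp hq
      exact Prod.ext (hp.2.trans hq.2.symm) hpq
  -- Step 3 : bound bset card by β
  set β : ℤ → ℝ := fun a => if a = 0 then 3*X else 2*X/|(a:ℝ)| + 1 with hβdef
  have hbset_le : ∀ a : ℤ, ((bset a).card : ℝ) ≤ β a := by
    intro a
    by_cases ha : a = 0
    · subst ha
      have hsub : bset 0 ⊆ Finset.Icc (-B) B := Finset.filter_subset _ _
      have hc : (bset 0).card ≤ (2*B+1).toNat := by
        rw [show (2*B+1).toNat = (Finset.Icc (-B) B).card by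
          rw [Int.card_Icc]; congr 1; ring]
        exact Finset.card_le_card hsub
      have : ((bset 0).card : ℝ) ≤ ((2*B+1 : ℤ):ℝ) := by
        calc ((bset 0).card : ℝ) ≤ ((2*B+1).toNat : ℝ) := by exact_mod_cast hc
          _ = ((2*B+1 : ℤ):ℝ) := by
            exact_mod_cast congrArg (fun z : ℤ => (z:ℝ))
              (Int.toNat_of_nonneg (by omega : (0:ℤ) ≤ 2*B+1))
      rw [hβdef]; simp only [if_pos rfl]
      push_cast at this
      calc ((bset 0).card : ℝ) ≤ 2*(B:ℝ)+1 := this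
        _ ≤ 2*L^4 + 1 := by linarith
        _ ≤ 3*X := by nlinarith
    · have ha1 : (1:ℝ) ≤ |(a:ℝ)| := by
        have : 1 ≤ |a| := Int.one_le_abs (by omega)
        calc (1:ℝ) ≤ ((|a| : ℤ):ℝ) := by exact_mod_cast this
          _ = |(a:ℝ)| := by push_cast; ring
      have ha0' : (0:ℝ) < |(a:ℝ)| := by linarith
      set m : ℤ := ⌊X / |(a:ℝ)|⌋ with hmdef
      have hm0 : 0 ≤ m := Int.le_floor.2 (by push_cast; positivity)
      have hsub : bset a ⊆ Finset.Icc (-m) m := by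
        intro b hb
        simp only [hbsetdef, Finset.mem_filter] at hb
        have hsq : (((a*b)^2 : ℤ):ℝ) ≤ L^13 := le_trans (by exact_mod_cast hb.2) hKle
        have habs : |(a:ℝ) * (b:ℝ)| ≤ X := by
          rw [← Real.sqrt_sq_eq_abs, hXdef]
          apply Real.sqrt_le_sqrt
          push_cast at hsq; exact_mod_cast hsq
        have hbabs : |(b:ℝ)| ≤ X / |(a:ℝ)| := by
          rw [le_div_iff₀ ha0', mul_comm]
          calc |(a:ℝ)| * |(b:ℝ)| = |(a:ℝ) * (b:ℝ)| := (abs_mul _ _).symm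
            _ ≤ X := habs
        have : |b| ≤ m := Int.le_floor.2 (by push_cast; exact hbabs)
        simp only [Finset.mem_Icc]
        exact abs_le.1 this
      have hc : (bset a).card ≤ (2*m+1).toNat := by
        rw [show (2*m+1).toNat = (Finset.Icc (-m) m).card by
          rw [Int.card_Icc]; congr 1; ring]
        exact Finset.card_le_card hsub
      have hmle : (m:ℝ) ≤ X / |(a:ℝ)| := Int.floor_le _
      rw [hβdef]; simp only [if_neg ha]
      calc ((bset a).card : ℝ) ≤ ((2*m+1).toNat : ℝ) := by exact_mod_cast hc
        _ = ((2*m+1 : ℤ):ℝ) := by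
            exact_mod_cast congrArg (fun z : ℤ => (z:ℝ))
              (Int.toNat_of_nonneg (by omega : (0:ℤ) ≤ 2*m+1))
        _ = 2*(m:ℝ)+1 := by push_cast; ring
        _ ≤ 2*(X/|(a:ℝ)|)+1 := by linarith
        _ = 2*X/|(a:ℝ)| + 1 := by ring
  -- Step 4 : sum of β
  have hsum : ∑ a ∈ Finset.Icc (-A) A, β a ≤ 12 * X * (1 + Real.log L) := by
    have hβneg : ∀ a : ℤ, β (-a) = β a := by
      intro a
      rw [hβdef]
      by_cases h : a = 0
      · simp [h]
      · simp only [neg_eq_zero, if_neg h]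
        push_cast
        rw [abs_neg]
    have hsplit : Finset.Icc (-A) A = (Finset.Icc (-A) (-1)) ∪ insert 0 (Finset.Icc 1 A) := by
      ext x
      simp only [Finset.mem_Icc, Finset.mem_union, Finset.mem_insert]
      omega
    have hdisj : Disjoint (Finset.Icc (-A) (-1)) (insert 0 (Finset.Icc 1 A)) := by
      rw [Finset.disjoint_left]
      intro x hx hx'
      simp only [Finset.mem_Icc] at hx
      simp only [Finset.mem_insert, Finset.mem_Icc] at hx'
      omega
    have h0notin : (0:ℤ) ∉ Finset.Icc (1:ℤ) A := by simp
    rw [hsplit, Finset.sum_union hdisj, Finset.sum_insert h0notin]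
    have hneg_eq : ∑ a ∈ Finset.Icc (-A) (-1), β a = ∑ a ∈ Finset.Icc (1:ℤ) A, β a := by
      apply Finset.sum_nbij' (fun a => -a) (fun a => -a)
      · intro a ha; simp only [Finset.mem_Icc] at ha ⊢; omega
      · intro a ha; simp only [Finset.mem_Icc] at ha ⊢; omega
      · intro a _; ring
      · intro a _; ring
      · intro a _; exact (hβneg a).symm
    have hpos_sum : ∑ a ∈ Finset.Icc (1:ℤ) A, β a ≤ 2*X*(1 + 3*Real.log L) + X := by
      have hterm : ∀ a ∈ Finset.Icc (1:ℤ) A, β a ≤ 2*X*((a:ℝ))⁻¹ + 1 := by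
        intro a ha
        simp only [Finset.mem_Icc] at ha
        rw [hβdef]
        simp only [if_neg (by omega : a ≠ 0)]
        have : |(a:ℝ)| = (a:ℝ) := abs_of_pos (by exact_mod_cast ha.1)
        rw [this, div_eq_mul_inv]
      calc ∑ a ∈ Finset.Icc (1:ℤ) A, β a
          ≤ ∑ a ∈ Finset.Icc (1:ℤ) A, (2*X*((a:ℝ))⁻¹ + 1) := Finset.sum_le_sum hterm
        _ = 2*X* (∑ a ∈ Finset.Icc (1:ℤ) A, ((a:ℝ))⁻¹) + (Finset.Icc (1:ℤ) A).card := by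
            rw [Finset.sum_add_distrib, ← Finset.mul_sum]
            simp
        _ ≤ 2*X*(1 + Real.log A) + (Finset.Icc (1:ℤ) A).card := by
            have := sum_inv_Icc_le A hA1
            nlinarith [this, hX0]
        _ ≤ 2*X*(1 + 3*Real.log L) + X := by
            have hlogA : Real.log A ≤ 3 * Real.log L := by
              calc Real.log A ≤ Real.log (L^3) :=
                    Real.log_le_log (by exact_mod_cast hA1) hAle
                _ = 3 * Real.log L := by rw [Real.log_pow]; push_cast; ring
            have hcard : ((Finset.Icc (1:ℤ) A).card : ℝ) ≤ X := by
              rw [Int.card_Icc, show A+1-1 = A from by ring]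
              have : ((A.toNat : ℕ) : ℝ) = (A:ℝ) := by
                exact_mod_cast congrArg (fun z : ℤ => (z:ℝ))
                  (Int.toNat_of_nonneg (by omega : (0:ℤ) ≤ A))
              rw [this]
              linarith
            nlinarith [hX0]
    have hβ0 : β 0 = 3*X := by rw [hβdef]; simp
    have hlogL : 0 ≤ Real.log L := Real.log_nonneg hL1
    rw [hneg_eq, hβ0]
    nlinarith [hpos_sum, hX0, hlogL]
  -- assemble
  calc (Nat.card (SetL L) : ℝ) ≤ (F.card : ℝ) := hcard1
    _ = ∑ a ∈ Finset.Icc (-A) A, ((F.filter (fun p => p.1 = a)).card : ℝ) := by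
        rw [hfib]; push_cast; ring
    _ ≤ ∑ a ∈ Finset.Icc (-A) A, β a := by
        apply Finset.sum_le_sum
        intro a _
        calc ((F.filter (fun p => p.1 = a)).card : ℝ) ≤ ((bset a).card : ℝ) := by
              exact_mod_cast hfib_le a
          _ ≤ β a := hbset_le a
    _ ≤ 12 * X * (1 + Real.log L) := hsum

lemma aux_tendsto :
    Filter.Tendsto (fun t : ℝ => (Real.log 12 + Real.log (1+t))/t) atTop (nhds 0) := by
  have h1 : Tendsto (fun t : ℝ => Real.log 12 / t) atTop (nhds 0) :=
    tendsto_const_nhds.div_atTop tendsto_id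
  have h2 : Tendsto (fun t : ℝ => Real.log (1+t) / (1+t)) atTop (nhds 0) :=
    (Real.isLittleO_log_id_atTop.tendsto_div_nhds_zero).comp
      (tendsto_atTop_add_const_left _ 1 tendsto_id)
  have h3 : Tendsto (fun t : ℝ => (1+t)/t) atTop (nhds 1) := by
    have : Tendsto (fun t : ℝ => 1/t + 1) atTop (nhds 1) := by
      have h : Tendsto (fun _ : ℝ => (1:ℝ)) atTop (nhds 1) := tendsto_const_nhds
      have h' := h.div_atTop (tendsto_id (α := ℝ))
      simpa using h'.add h
    apply this.congr'
    filter_upwards [eventually_ge_atTop (1:ℝ)] with t ht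
    field_simp
  have h4 : Tendsto (fun t : ℝ => Real.log (1+t) / t) atTop (nhds 0) := by
    have := h2.mul h3
    rw [mul_one] at this
    apply this.congr'
    filter_upwards [eventually_ge_atTop (1:ℝ)] with t ht
    have h1t : (1:ℝ)+t ≠ 0 := by linarith
    have ht0 : t ≠ 0 := by linarith
    field_simp
  have := h1.add h4
  rw [add_zero] at this
  apply this.congr
  intro t
  ring

/-- With `N(L)` the number of integer pairs `(a,b)` with `|a| ≤ L³`, `|b| ≤ L⁴`,
`a²|b| ≤ L⁹`, the function `L ↦ log N(L) / log L` tends to `13/2` as `L → ∞`. -/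
theorem stmt_5 :
    Filter.Tendsto (fun L : ℝ =>
        Real.log (Nat.card {ab : ℤ × ℤ | (|ab.1| : ℝ) ≤ L ^ 3 ∧ (|ab.2| : ℝ) ≤ L ^ 4 ∧
          ((ab.1 ^ 2 * |ab.2| : ℤ) : ℝ) ≤ L ^ 9} : ℝ) / Real.log L)
      Filter.atTop (nhds (13 / 2)) := by
  apply tendsto_of_tendsto_of_tendsto_of_le_of_le'
    (g := fun _ : ℝ => (13:ℝ)/2)
    (h := fun L : ℝ => 13/2 + (Real.log 12 + Real.log (1 + Real.log L))/Real.log L)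
  · exact tendsto_const_nhds
  · have h : Tendsto (fun _ : ℝ => (13:ℝ)/2) atTop (nhds (13/2)) := tendsto_const_nhds
    have h2 := h.add (aux_tendsto.comp Real.tendsto_log_atTop)
    simpa using h2
  · filter_upwards [eventually_ge_atTop (2:ℝ)] with L hL
    have hlow := lower L hL
    have hX1 : (1:ℝ) ≤ Real.sqrt (L^13) := by
      rw [show (1:ℝ) = Real.sqrt 1 by simp]
      exact Real.sqrt_le_sqrt (one_le_pow₀ (by linarith))
    have hX0 : (0:ℝ) < Real.sqrt (L^13) := by linarith
    have hlogL : 0 < Real.log L := Real.log_pos (by linarith)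
    have hlogX : Real.log (Real.sqrt (L^13)) = 13/2 * Real.log L := by
      rw [Real.log_sqrt (by positivity), Real.log_pow]
      push_cast; ring
    have hSeq : {ab : ℤ × ℤ | (|ab.1| : ℝ) ≤ L ^ 3 ∧ (|ab.2| : ℝ) ≤ L ^ 4 ∧
          ((ab.1 ^ 2 * |ab.2| : ℤ) : ℝ) ≤ L ^ 9} = SetL L := rfl
    rw [hSeq, le_div_iff₀ hlogL]
    calc (13:ℝ)/2 * Real.log L = Real.log (Real.sqrt (L^13)) := hlogX.symm
      _ ≤ Real.log (Nat.card (SetL L)) := Real.log_le_log hX0 hlow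
  · filter_upwards [eventually_ge_atTop (2:ℝ)] with L hL
    have hlow := lower L hL
    have hup := upper L hL
    have hX1 : (1:ℝ) ≤ Real.sqrt (L^13) := by
      rw [show (1:ℝ) = Real.sqrt 1 by simp]
      exact Real.sqrt_le_sqrt (one_le_pow₀ (by linarith))
    have hX0 : (0:ℝ) < Real.sqrt (L^13) := by linarith
    have hlogL : 0 < Real.log L := Real.log_pos (by linarith)
    have hlogLnn : 0 ≤ Real.log L := le_of_lt hlogL
    have h1l : (0:ℝ) < 1 + Real.log L := by linarith
    have hN0 : (0:ℝ) < (Nat.card (SetL L) : ℝ) := by linarith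
    have hlogX : Real.log (Real.sqrt (L^13)) = 13/2 * Real.log L := by
      rw [Real.log_sqrt (by positivity), Real.log_pow]
      push_cast; ring
    have hlogN : Real.log (Nat.card (SetL L)) ≤
        Real.log 12 + 13/2 * Real.log L + Real.log (1 + Real.log L) := by
      calc Real.log (Nat.card (SetL L))
          ≤ Real.log (12 * Real.sqrt (L^13) * (1 + Real.log L)) :=
            Real.log_le_log hN0 hup
        _ = Real.log 12 + Real.log (Real.sqrt (L^13)) + Real.log (1 + Real.log L) := by
            rw [Real.log_mul (by positivity) (ne_of_gt h1l),
              Real.log_mul (by norm_num) (ne_of_gt hX0)]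
        _ = Real.log 12 + 13/2 * Real.log L + Real.log (1 + Real.log L) := by
            rw [hlogX]
    have hSeq : {ab : ℤ × ℤ | (|ab.1| : ℝ) ≤ L ^ 3 ∧ (|ab.2| : ℝ) ≤ L ^ 4 ∧
          ((ab.1 ^ 2 * |ab.2| : ℤ) : ℝ) ≤ L ^ 9} = SetL L := rfl
    rw [hSeq, div_le_iff₀ hlogL, add_mul, div_mul_cancel₀ _ (ne_of_gt hlogL)]
    linarith
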